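/- Let {(y^n, z^n)} be relatively compact in the Skorokhod J₁ topology on D([0,∞), ℝ^{2d}) with y^n_0 ∈ closure D, and let x^n solve the penalized equation x^n_t = y^n_t - n∫_0^t (x^n_s - Π(x^n_s)) ds. Then for every q ≥ 0, lim_{δ↓0} limsup_{n→∞} ω̄''_{(x^n, z^n)}(δ, q) = 0. -/

import Mathlib

open scoped RealInnerProductSpace
open MeasureTheory Set Filter

variable {d : ℕ}

/-- A càdlàg function on `[0,∞)`: right-continuous with left limits. -/
def Cadlag (f : ℝ → EuclideanSpace ℝ (Fin d)) : Prop :=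
  (∀ t : ℝ, 0 ≤ t → ContinuousWithinAt f (Set.Ici t) t) ∧
  (∀ t : ℝ, 0 < t → ∃ l, Filter.Tendsto f (nhdsWithin t (Set.Iio t)) (nhds l))

/-- `proj` is the metric projection (nearest-point map) onto `C`. -/
def IsProjOn (C : Set (EuclideanSpace ℝ (Fin d)))
    (proj : EuclideanSpace ℝ (Fin d) → EuclideanSpace ℝ (Fin d)) : Prop :=
  ∀ z, proj z ∈ C ∧ ∀ w ∈ C, dist z (proj z) ≤ dist z w

/-- `x` solves the penalized equation `x t = y t - c ∫_0^t (x s - proj (x s)) ds`. -/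
def PenalizedSol (proj : EuclideanSpace ℝ (Fin d) → EuclideanSpace ℝ (Fin d))
    (c : ℝ) (y x : ℝ → EuclideanSpace ℝ (Fin d)) : Prop :=
  (∀ t : ℝ, 0 ≤ t → IntervalIntegrable (fun s => x s - proj (x s)) volume 0 t) ∧
  (∀ t : ℝ, 0 ≤ t → x t = y t - c • ∫ s in (0:ℝ)..t, (x s - proj (x s)))

/-- The oscillation of `f` on `[s, t)` is `< c`. -/
def OscLtOn (f : ℝ → EuclideanSpace ℝ (Fin d)) (s t c : ℝ) : Prop :=
  ∀ u ∈ Set.Ico s t, ∀ v ∈ Set.Ico s t, ‖f u - f v‖ < c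

/-- `ω'_f(δ, q) < c`: there is a subdivision `0 = s 0 < ⋯ < s r = q` whose first `r - 1`
steps have length `≥ δ` and on whose half-open intervals `f` oscillates less than `c`. -/
def OmegaPrimeLt (f : ℝ → EuclideanSpace ℝ (Fin d)) (δ q c : ℝ) : Prop :=
  ∃ r : ℕ, 0 < r ∧ ∃ s : ℕ → ℝ, s 0 = 0 ∧ s r = q ∧
    (∀ k < r, s k < s (k + 1)) ∧ (∀ k, k + 1 < r → δ ≤ s (k + 1) - s k) ∧
    ∀ k < r, OscLtOn f (s k) (s (k + 1)) c

/-- Convergence in the Skorokhod `J₁` topology on `D([0,∞), F)`, via time changes. -/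
def J1Tendsto {F : Type*} [NormedAddCommGroup F] (fn : ℕ → ℝ → F) (f : ℝ → F) : Prop :=
  ∃ lam : ℕ → ℝ → ℝ,
    (∀ n, StrictMono (lam n) ∧ Continuous (lam n) ∧ lam n 0 = 0 ∧
      Filter.Tendsto (lam n) Filter.atTop Filter.atTop) ∧
    ∀ q > (0:ℝ), ∀ ε > (0:ℝ), ∃ N : ℕ, ∀ n ≥ N, ∀ t ∈ Set.Icc (0:ℝ) q,
      |lam n t - t| ≤ ε ∧ ‖fn n (lam n t) - f t‖ ≤ ε

/-- `(x, k)` solves the Skorokhod problem on the convex domain `D` associated with `y`: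
`x = y + k`, `x` is `closure D`-valued, `k` is of locally bounded variation with `k 0 = 0`,
`dk = n d|k|` where `n` is an inward normal at `x` on the boundary, and `|k|` increases
only when `x ∈ ∂D`.  Here `v` plays the role of `|k|` and `nv` of the normal field. -/
def IsSkorokhodSol (D : Set (EuclideanSpace ℝ (Fin d)))
    (y x : ℝ → EuclideanSpace ℝ (Fin d)) : Prop :=
  ∃ (k : ℝ → EuclideanSpace ℝ (Fin d)) (v : StieltjesFunction ℝ)
    (nv : ℝ → EuclideanSpace ℝ (Fin d)),
    (∀ t : ℝ, 0 ≤ t → x t = y t + k t) ∧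
    (∀ t : ℝ, 0 ≤ t → x t ∈ closure D) ∧
    k 0 = 0 ∧ v 0 = 0 ∧
    (∀ t : ℝ, 0 ≤ t → k t = ∫ s in Set.Ioc (0:ℝ) t, nv s ∂v.measure) ∧
    (∀ s : ℝ, 0 ≤ s → x s ∈ frontier D →
      ‖nv s‖ = 1 ∧ ∀ z ∈ closure D, 0 ≤ ⟪z - x s, nv s⟫) ∧
    v.measure {s : ℝ | 0 ≤ s ∧ x s ∉ frontier D} = 0
set_option maxHeartbeats 4000000
set_option linter.unusedSectionVars false
set_option linter.unusedVariables false

namespace Stmt13Aux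

section M2
variable {E : Type*} [NormedAddCommGroup E] [InnerProductSpace ℝ E] [CompleteSpace E]



variable {E : Type*} [NormedAddCommGroup E] [InnerProductSpace ℝ E] [CompleteSpace E]

lemma continuousOn_primitive'' {f : ℝ → E} {s u : ℝ} (hf : IntegrableOn f (Ioc s u)) :
    ContinuousOn (fun v => ∫ w in Ioc s v, f w) (Icc s u) := by
  have h : IntegrableOn f (Icc s u) := (integrableOn_Icc_iff_integrableOn_Ioc (by simp)).2 hf
  exact intervalIntegral.continuousOn_primitive h

lemma integrableOn_inner_continuous {f : ℝ → E} {G : ℝ → E} {s u : ℝ}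
    (hf : IntegrableOn f (Ioc s u)) (hG : ContinuousOn G (Icc s u)) :
    IntegrableOn (fun v => ⟪f v, G v⟫) (Ioc s u) := by
  obtain ⟨M, hM⟩ := isCompact_Icc.exists_bound_of_continuousOn hG
  refine Integrable.mono' (hf.norm.const_mul M) ?_ ?_
  · exact AEStronglyMeasurable.inner hf.aestronglyMeasurable
      ((hG.mono Ioc_subset_Icc_self).aestronglyMeasurable measurableSet_Ioc)
  · filter_upwards [ae_restrict_mem measurableSet_Ioc] with v hv
    have h1 : ‖G v‖ ≤ M := hM v (Ioc_subset_Icc_self hv)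
    calc ‖⟪f v, G v⟫‖ ≤ ‖f v‖ * ‖G v‖ := norm_inner_le_norm _ _
      _ ≤ ‖f v‖ * M := mul_le_mul_of_nonneg_left h1 (norm_nonneg _)
      _ = M * ‖f v‖ := mul_comm _ _

lemma flip_integral_inner {g : ℝ → E} {ν : Measure ℝ} (hg : Integrable g ν) (c : E) :
    ∫ x, ⟪g x, c⟫ ∂ν = ⟪∫ x, g x ∂ν, c⟫ := by
  have e1 : ∫ x, ⟪g x, c⟫ ∂ν = ∫ x, ⟪c, g x⟫ ∂ν :=
    integral_congr_ae (Eventually.of_forall fun x => real_inner_comm _ _)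
  rw [e1, integral_inner hg c, real_inner_comm]

lemma norm_sq_integral_eq {f : ℝ → E} {s u : ℝ} (hsu : s ≤ u)
    (hf : IntegrableOn f (Ioc s u)) :
    ‖∫ v in Ioc s u, f v‖ ^ 2
      = 2 * ∫ v in Ioc s u, ⟪f v, ∫ w in Ioc s v, f w⟫ := by
  have hFc : ContinuousOn (fun v => ∫ w in Ioc s v, f w) (Icc s u) :=
    continuousOn_primitive'' hf
  have hAint : IntegrableOn (fun v => ⟪f v, ∫ w in Ioc s v, f w⟫) (Ioc s u) :=
    integrableOn_inner_continuous hf hFc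
  have hCint : IntegrableOn (fun v => ⟪f v, ∫ w in Ioc s u, f w⟫) (Ioc s u) :=
    integrableOn_inner_continuous hf continuousOn_const
  have step1 : ∫ v in Ioc s u, ⟪f v, ∫ w in Ioc s u, f w⟫
      = ‖∫ v in Ioc s u, f v‖ ^ 2 := by
    rw [flip_integral_inner hf, real_inner_self_eq_norm_sq]
  -- integrability of the kernel
  have hKmeas : AEStronglyMeasurable
      (Function.uncurry (fun v w => if v < w then ⟪f v, f w⟫ else (0:ℝ)))
      ((volume.restrict (Ioc s u)).prod (volume.restrict (Ioc s u))) := by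
    have hset : MeasurableSet {p : ℝ × ℝ | p.1 < p.2} :=
      (isOpen_lt continuous_fst continuous_snd).measurableSet
    have hin : AEStronglyMeasurable (fun p : ℝ × ℝ => ⟪f p.1, f p.2⟫)
        ((volume.restrict (Ioc s u)).prod (volume.restrict (Ioc s u))) :=
      AEStronglyMeasurable.inner
        (hf.aestronglyMeasurable.comp_fst) (hf.aestronglyMeasurable.comp_snd)
    have heq : Function.uncurry (fun v w => if v < w then ⟪f v, f w⟫ else (0:ℝ))
        = {p : ℝ × ℝ | p.1 < p.2}.indicator (fun p => ⟪f p.1, f p.2⟫) := by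
      funext p
      rw [Set.indicator_apply]
      rfl
    rw [heq]
    exact hin.indicator hset
  have hKint : Integrable
      (Function.uncurry (fun v w => if v < w then ⟪f v, f w⟫ else (0:ℝ)))
      ((volume.restrict (Ioc s u)).prod (volume.restrict (Ioc s u))) := by
    refine Integrable.mono' (hf.norm.mul_prod hf.norm) hKmeas ?_
    refine Eventually.of_forall fun p => ?_
    show ‖if p.1 < p.2 then ⟪f p.1, f p.2⟫ else (0:ℝ)‖ ≤ ‖f p.1‖ * ‖f p.2‖
    by_cases hp : p.1 < p.2
    · rw [if_pos hp]; exact norm_inner_le_norm _ _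
    · rw [if_neg hp, norm_zero]; positivity
  have swap : ∫ v in Ioc s u, ∫ w in Ioc s u, (if v < w then ⟪f v, f w⟫ else (0:ℝ))
      = ∫ w in Ioc s u, ∫ v in Ioc s u, (if v < w then ⟪f v, f w⟫ else (0:ℝ)) :=
    integral_integral_swap hKint
  -- identify LHS of swap
  have lhs_eq : ∫ v in Ioc s u, ∫ w in Ioc s u, (if v < w then ⟪f v, f w⟫ else (0:ℝ))
      = ∫ v in Ioc s u,
          (⟪f v, ∫ w in Ioc s u, f w⟫ - ⟪f v, ∫ w in Ioc s v, f w⟫) := by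
    refine integral_congr_ae ?_
    filter_upwards [ae_restrict_mem measurableSet_Ioc] with v hv
    have hind : (fun w => if v < w then ⟪f v, f w⟫ else (0:ℝ))
        = (Ioi v).indicator (fun w => ⟪f v, f w⟫) := by
      funext w
      rw [Set.indicator_apply]
      rfl
    have h1 : ∫ w in Ioc s u, (if v < w then ⟪f v, f w⟫ else (0:ℝ))
        = ∫ w in Ioc s u ∩ Ioi v, ⟪f v, f w⟫ := by
      rw [hind]
      exact setIntegral_indicator measurableSet_Ioi
    have hseteq : Ioc s u ∩ Ioi v = Ioc v u := by
      ext w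
      simp only [mem_inter_iff, mem_Ioc, mem_Ioi]
      constructor
      · rintro ⟨⟨_, h2⟩, h3⟩; exact ⟨h3, h2⟩
      · rintro ⟨h1', h2⟩; exact ⟨⟨lt_trans hv.1 h1', h2⟩, h1'⟩
    have hsplit : (∫ w in Ioc s v, ⟪f v, f w⟫) + (∫ w in Ioc v u, ⟪f v, f w⟫)
        = ∫ w in Ioc s u, ⟪f v, f w⟫ := by
      rw [← setIntegral_union (Ioc_disjoint_Ioc_of_le le_rfl) measurableSet_Ioc
        (Integrable.const_inner (𝕜 := ℝ) _ (hf.mono_set (Ioc_subset_Ioc_right hv.2)))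
        (Integrable.const_inner (𝕜 := ℝ) _ (hf.mono_set (Ioc_subset_Ioc_left hv.1.le))),
        Ioc_union_Ioc_eq_Ioc hv.1.le hv.2]
    have h2 : ∫ w in Ioc s u, ⟪f v, f w⟫ = ⟪f v, ∫ w in Ioc s u, f w⟫ :=
      integral_inner hf _
    have h3 : ∫ w in Ioc s v, ⟪f v, f w⟫ = ⟪f v, ∫ w in Ioc s v, f w⟫ :=
      integral_inner (hf.mono_set (Ioc_subset_Ioc_right hv.2)) _
    rw [h1, hseteq]
    rw [h2, h3] at hsplit
    linarith
  -- identify RHS of swap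
  have rhs_eq : ∫ w in Ioc s u, ∫ v in Ioc s u, (if v < w then ⟪f v, f w⟫ else (0:ℝ))
      = ∫ w in Ioc s u, ⟪f w, ∫ v in Ioc s w, f v⟫ := by
    refine integral_congr_ae ?_
    filter_upwards [ae_restrict_mem measurableSet_Ioc] with w hw
    have hind : (fun v => if v < w then ⟪f v, f w⟫ else (0:ℝ))
        = (Iio w).indicator (fun v => ⟪f v, f w⟫) := by
      funext v
      rw [Set.indicator_apply]
      rfl
    have h1 : ∫ v in Ioc s u, (if v < w then ⟪f v, f w⟫ else (0:ℝ))
        = ∫ v in Ioc s u ∩ Iio w, ⟪f v, f w⟫ := by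
      rw [hind]
      exact setIntegral_indicator measurableSet_Iio
    have hseteq : Ioc s u ∩ Iio w = Ioo s w := by
      ext v
      simp only [mem_inter_iff, mem_Ioc, mem_Ioo, mem_Iio]
      constructor
      · rintro ⟨⟨h1', _⟩, h3⟩; exact ⟨h1', h3⟩
      · rintro ⟨h1', h2⟩; exact ⟨⟨h1', le_trans h2.le hw.2⟩, h2⟩
    have h2 : ∫ v in Ioo s w, ⟪f v, f w⟫ = ∫ v in Ioc s w, ⟪f v, f w⟫ :=
      integral_Ioc_eq_integral_Ioo.symm
    have h3 : ∫ v in Ioc s w, ⟪f v, f w⟫ = ⟪∫ v in Ioc s w, f v, f w⟫ :=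
      flip_integral_inner (hf.mono_set (Ioc_subset_Ioc_right hw.2)) _
    rw [h1, hseteq, h2, h3, real_inner_comm]
  have hsub : ∫ v in Ioc s u,
      (⟪f v, ∫ w in Ioc s u, f w⟫ - ⟪f v, ∫ w in Ioc s v, f w⟫)
      = (∫ v in Ioc s u, ⟪f v, ∫ w in Ioc s u, f w⟫)
        - ∫ v in Ioc s u, ⟪f v, ∫ w in Ioc s v, f w⟫ :=
    integral_sub hCint hAint
  rw [lhs_eq, rhs_eq, hsub] at swap
  rw [← step1]
  linarith

lemma key_identity {f : ℝ → E} {s u : ℝ} (hsu : s ≤ u)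
    (hf : IntegrableOn f (Ioc s u)) (c : E) :
    ‖(∫ v in Ioc s u, f v) + c‖ ^ 2
      = ‖c‖ ^ 2 + 2 * ∫ v in Ioc s u, ⟪f v, (∫ w in Ioc s v, f w) + c⟫ := by
  have hFc : ContinuousOn (fun v => ∫ w in Ioc s v, f w) (Icc s u) :=
    continuousOn_primitive'' hf
  have hAint : IntegrableOn (fun v => ⟪f v, ∫ w in Ioc s v, f w⟫) (Ioc s u) :=
    integrableOn_inner_continuous hf hFc
  have hcint : IntegrableOn (fun v => ⟪f v, c⟫) (Ioc s u) :=
    hf.inner_const c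
  have hsum : ∫ v in Ioc s u, ⟪f v, (∫ w in Ioc s v, f w) + c⟫
      = (∫ v in Ioc s u, ⟪f v, ∫ w in Ioc s v, f w⟫) + ∫ v in Ioc s u, ⟪f v, c⟫ := by
    have : ∀ v, ⟪f v, (∫ w in Ioc s v, f w) + c⟫
        = ⟪f v, ∫ w in Ioc s v, f w⟫ + ⟪f v, c⟫ := fun v => inner_add_right _ _ _
    simp_rw [this]
    exact integral_add hAint hcint
  have hinner : ∫ v in Ioc s u, ⟪f v, c⟫ = ⟪∫ v in Ioc s u, f v, c⟫ :=
    flip_integral_inner hf c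
  rw [hsum, hinner, norm_add_sq_real]
  have h2 := norm_sq_integral_eq hsu hf
  linarith

lemma evol_le {f : ℝ → E} {σ τ : ℝ} (hστ : σ ≤ τ) (hf : IntegrableOn f (Ioc σ τ))
    {c : ℝ} (hc : 0 ≤ c) (P : ℝ → E) (b : E)
    (hP : ∀ v ∈ Icc σ τ, P v = P σ - c • ∫ w in Ioc σ v, f w)
    {B : ℝ → ℝ} (hB : IntegrableOn B (Ioc σ τ))
    (hbd : ∀ v ∈ Ioo σ τ, B v ≤ ⟪f v, P v - b⟫) :
    ‖P τ - b‖ ^ 2 ≤ ‖P σ - b‖ ^ 2 - 2 * c * ∫ v in Ioc σ τ, B v := by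
  set f' : ℝ → E := fun v => (-c) • f v with hf'def
  have hf' : IntegrableOn f' (Ioc σ τ) := hf.smul (-c)
  have hFeq : ∀ v, (∫ w in Ioc σ v, f' w) = (-c) • ∫ w in Ioc σ v, f w := by
    intro v
    rw [hf'def]
    exact integral_smul _ _
  have hPv : ∀ v ∈ Icc σ τ, (∫ w in Ioc σ v, f' w) + (P σ - b) = P v - b := by
    intro v hv
    rw [hFeq v, hP v hv]
    module
  have hid := key_identity hστ hf' (P σ - b)
  rw [hPv τ (right_mem_Icc.2 hστ)] at hid
  have hcongr : ∫ v in Ioc σ τ, ⟪f' v, (∫ w in Ioc σ v, f' w) + (P σ - b)⟫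
      = ∫ v in Ioc σ τ, (-c) * ⟪f v, P v - b⟫ := by
    refine integral_congr_ae ?_
    filter_upwards [ae_restrict_mem measurableSet_Ioc] with v hv
    rw [hPv v (Ioc_subset_Icc_self hv), hf'def]
    exact real_inner_smul_left _ _ _
  rw [hcongr] at hid
  have hpull : ∫ v in Ioc σ τ, (-c) * ⟪f v, P v - b⟫
      = (-c) * ∫ v in Ioc σ τ, ⟪f v, P v - b⟫ := by
    simpa [smul_eq_mul] using
      integral_smul (μ := volume.restrict (Ioc σ τ)) (-c) (fun v => ⟪f v, P v - b⟫)
  rw [hpull] at hid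
  -- integrability of the inner integrand
  have hPc : ContinuousOn (fun v => P v - b) (Icc σ τ) := by
    have h1 : ContinuousOn (fun v => (P σ - c • ∫ w in Ioc σ v, f w) - b) (Icc σ τ) :=
      (continuousOn_const.sub ((continuousOn_primitive'' hf).const_smul c)).sub
        continuousOn_const
    exact h1.congr fun v hv => by rw [hP v hv]
  have hIint : IntegrableOn (fun v => ⟪f v, P v - b⟫) (Ioc σ τ) :=
    integrableOn_inner_continuous hf hPc
  have hmono : ∫ v in Ioc σ τ, B v ≤ ∫ v in Ioc σ τ, ⟪f v, P v - b⟫ := by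
    rw [integral_Ioc_eq_integral_Ioo, integral_Ioc_eq_integral_Ioo]
    exact setIntegral_mono_on (hB.mono_set Ioo_subset_Ioc_self)
      (hIint.mono_set Ioo_subset_Ioc_self) measurableSet_Ioo hbd
  have hmul : 2 * c * ∫ v in Ioc σ τ, B v ≤ 2 * c * ∫ v in Ioc σ τ, ⟪f v, P v - b⟫ :=
    mul_le_mul_of_nonneg_left hmono (by positivity)
  nlinarith [hid]
end M2

section M3
variable {F : Type*} [NormedAddCommGroup F]



variable {F : Type*} [NormedAddCommGroup F]

/-- A finite partition of `[0,t]` into half-open cells on which `f` oscillates `≤ η`. -/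
def GoodPart (f : ℝ → F) (η t : ℝ) : Prop :=
  ∃ (m : ℕ) (c : ℕ → ℝ), 0 < m ∧ c 0 = 0 ∧ c m = t ∧
    (∀ i, i < m → c i < c (i + 1)) ∧
    (∀ i, i < m → ∀ v ∈ Ico (c i) (c (i + 1)), ∀ v' ∈ Ico (c i) (c (i + 1)),
      ‖f v - f v'‖ ≤ η)

lemma goodPart_extend {f : ℝ → F} {η t t' : ℝ} (hg : GoodPart f η t) (htt' : t < t')
    (hcell : ∀ v ∈ Ico t t', ∀ v' ∈ Ico t t', ‖f v - f v'‖ ≤ η) :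
    GoodPart f η t' := by
  obtain ⟨m, c, hm, hc0, hcm, hmono, hosc⟩ := hg
  refine ⟨m + 1, fun i => if i ≤ m then c i else t', Nat.succ_pos m, ?_, ?_, ?_, ?_⟩
  · simp [hc0]
  · simp
  · intro i hi
    rcases Nat.lt_or_ge i m with h | h
    · have h1 : i ≤ m := h.le
      have h2 : i + 1 ≤ m := h
      simp only [if_pos h1, if_pos h2]
      exact hmono i h
    · have h1 : i = m := by omega
      subst h1
      simp only [le_refl, if_pos, if_neg (by omega : ¬ i + 1 ≤ i)]
      rw [hcm]
      exact htt'
  · intro i hi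
    rcases Nat.lt_or_ge i m with h | h
    · have h1 : i ≤ m := h.le
      have h2 : i + 1 ≤ m := h
      simp only [if_pos h1, if_pos h2]
      exact hosc i h
    · have h1 : i = m := by omega
      subst h1
      simp only [le_refl, if_pos, if_neg (by omega : ¬ i + 1 ≤ i)]
      rw [hcm]
      exact hcell

lemma osc_right {f : ℝ → F} (hr : ∀ t : ℝ, 0 ≤ t → ContinuousWithinAt f (Ici t) t)
    {η : ℝ} (hη : 0 < η) {t : ℝ} (ht : 0 ≤ t) :
    ∃ h > 0, ∀ v ∈ Ico t (t + h), ∀ v' ∈ Ico t (t + h), ‖f v - f v'‖ ≤ η := by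
  have htt := hr t ht
  have hev : f ⁻¹' Metric.ball (f t) (η / 2) ∈ nhdsWithin t (Ici t) :=
    htt (Metric.ball_mem_nhds (f t) (by positivity))
  rw [Metric.mem_nhdsWithin_iff] at hev
  obtain ⟨ε, hε, hsub⟩ := hev
  refine ⟨ε, hε, ?_⟩
  have key : ∀ v ∈ Ico t (t + ε), dist (f v) (f t) < η / 2 := by
    intro v hv
    have : v ∈ Metric.ball t ε ∩ Ici t := by
      constructor
      · rw [Metric.mem_ball, Real.dist_eq, abs_lt]
        constructor <;> [linarith [hv.1]; linarith [hv.2]]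
      · exact hv.1
    exact hsub this
  intro v hv v' hv'
  have h1 := key v hv
  have h2 := key v' hv'
  calc ‖f v - f v'‖ = dist (f v) (f v') := (dist_eq_norm _ _).symm
    _ ≤ dist (f v) (f t) + dist (f t) (f v') := dist_triangle _ _ _
    _ ≤ η / 2 + η / 2 := by
        rw [dist_comm (f t)]
        exact add_le_add h1.le h2.le
    _ = η := by ring

lemma osc_left {f : ℝ → F} (hl : ∀ t : ℝ, 0 < t → ∃ l, Tendsto f (nhdsWithin t (Iio t)) (nhds l))
    {η : ℝ} (hη : 0 < η) {t : ℝ} (ht : 0 < t) :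
    ∃ h > 0, ∀ v ∈ Ioo (t - h) t, ∀ v' ∈ Ioo (t - h) t, ‖f v - f v'‖ ≤ η := by
  obtain ⟨l, hlt⟩ := hl t ht
  have hev : f ⁻¹' Metric.ball l (η / 2) ∈ nhdsWithin t (Iio t) :=
    hlt (Metric.ball_mem_nhds l (by positivity))
  rw [Metric.mem_nhdsWithin_iff] at hev
  obtain ⟨ε, hε, hsub⟩ := hev
  refine ⟨ε, hε, ?_⟩
  have key : ∀ v ∈ Ioo (t - ε) t, dist (f v) l < η / 2 := by
    intro v hv
    have : v ∈ Metric.ball t ε ∩ Iio t := by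
      constructor
      · rw [Metric.mem_ball, Real.dist_eq, abs_lt]
        constructor <;> [linarith [hv.1]; linarith [hv.2]]
      · exact hv.2
    exact hsub this
  intro v hv v' hv'
  have h1 := key v hv
  have h2 := key v' hv'
  calc ‖f v - f v'‖ = dist (f v) (f v') := (dist_eq_norm _ _).symm
    _ ≤ dist (f v) l + dist l (f v') := dist_triangle _ _ _
    _ ≤ η / 2 + η / 2 := by
        rw [dist_comm l]
        exact add_le_add h1.le h2.le
    _ = η := by ring

lemma exists_partition {f : ℝ → F}
    (hr : ∀ t : ℝ, 0 ≤ t → ContinuousWithinAt f (Ici t) t)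
    (hl : ∀ t : ℝ, 0 < t → ∃ l, Tendsto f (nhdsWithin t (Iio t)) (nhds l))
    {T η : ℝ} (hT : 0 < T) (hη : 0 < η) : GoodPart f η T := by
  set S : Set ℝ := {t | 0 < t ∧ t ≤ T ∧ GoodPart f η t} with hS
  -- S is nonempty
  obtain ⟨h0, hh0, hcell0⟩ := osc_right hr hη (le_refl 0)
  have ht1 : min T (h0 / 2) ∈ S := by
    have hpos : 0 < min T (h0 / 2) := lt_min hT (by positivity)
    refine ⟨hpos, min_le_left _ _, 1, fun i => if i = 0 then 0 else min T (h0 / 2),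
      one_pos, by simp, by simp, ?_, ?_⟩
    · intro i hi
      have : i = 0 := by omega
      subst this
      simpa using hpos
    · intro i hi
      have : i = 0 := by omega
      subst this
      simp only [if_pos rfl, if_neg (one_ne_zero)]
      intro v hv v' hv'
      refine hcell0 v ⟨hv.1, ?_⟩ v' ⟨hv'.1, ?_⟩
      · calc v < min T (h0 / 2) := hv.2
          _ ≤ h0 / 2 := min_le_right _ _
          _ < 0 + h0 := by linarith
      · calc v' < min T (h0 / 2) := hv'.2
          _ ≤ h0 / 2 := min_le_right _ _
          _ < 0 + h0 := by linarith
  have hSne : S.Nonempty := ⟨_, ht1⟩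
  have hSbdd : BddAbove S := ⟨T, fun t ht => ht.2.1⟩
  set τ := sSup S with hτ
  have hτpos : 0 < τ := lt_of_lt_of_le ht1.1 (le_csSup hSbdd ht1)
  have hτle : τ ≤ T := csSup_le hSne fun t ht => ht.2.1
  -- τ ∈ S
  have hτS : GoodPart f η τ := by
    obtain ⟨γ, hγ, hcellL⟩ := osc_left hl hη hτpos
    obtain ⟨t, htS, htγ⟩ := exists_lt_of_lt_csSup hSne (by linarith : τ - γ < τ)
    have htτ : t ≤ τ := le_csSup hSbdd htS
    rcases eq_or_lt_of_le htτ with h | h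
    · rw [← h]; exact htS.2.2
    · refine goodPart_extend htS.2.2 h ?_
      intro v hv v' hv'
      refine hcellL v ⟨lt_of_lt_of_le htγ hv.1, hv.2⟩ v' ⟨lt_of_lt_of_le htγ hv'.1, hv'.2⟩
  -- τ = T
  rcases eq_or_lt_of_le hτle with h | h
  · rw [← h]; exact hτS
  · exfalso
    obtain ⟨h1, hh1, hcellR⟩ := osc_right hr hη hτpos.le
    have ht2 : min T (τ + h1 / 2) ∈ S := by
      have hgt : τ < min T (τ + h1 / 2) := lt_min h (by linarith)
      refine ⟨lt_trans hτpos hgt, min_le_left _ _, ?_⟩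
      refine goodPart_extend hτS hgt ?_
      intro v hv v' hv'
      have hb : min T (τ + h1 / 2) ≤ τ + h1 / 2 := min_le_right _ _
      refine hcellR v ⟨hv.1, by linarith [hv.2]⟩ v' ⟨hv'.1, by linarith [hv'.2]⟩
    have := le_csSup hSbdd ht2
    have hgt : τ < min T (τ + h1 / 2) := lt_min h (by linarith)
    linarith

lemma part_mono {c : ℕ → ℝ} {m : ℕ} (hmono : ∀ i, i < m → c i < c (i + 1)) :
    ∀ i j, i ≤ j → j ≤ m → c i ≤ c j := by
  intro i j hij hjm
  induction j with
  | zero => simp_all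
  | succ k ih =>
    rcases Nat.lt_or_ge i (k + 1) with h | h
    · have h1 : c i ≤ c k := ih (by omega) (by omega)
      have h2 : c k < c (k + 1) := hmono k (by omega)
      linarith
    · have : i = k + 1 := by omega
      subst this
      exact le_refl _

lemma exists_ubound (g : ℕ → ℝ) (m : ℕ) : ∃ Y, ∀ i, i ≤ m → g i ≤ Y := by
  induction m with
  | zero => exact ⟨g 0, by intro i hi; interval_cases i; exact le_refl _⟩
  | succ k ih =>
    obtain ⟨Y, hY⟩ := ih
    refine ⟨max Y (g (k + 1)), fun i hi => ?_⟩
    rcases Nat.lt_or_ge i (k + 1) with h | h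
    · exact le_trans (hY i (by omega)) (le_max_left _ _)
    · have : i = k + 1 := by omega
      subst this
      exact le_max_right _ _

lemma exists_cell {c : ℕ → ℝ} {m : ℕ} (hmono : ∀ i, i < m → c i < c (i + 1))
    {v : ℝ} (h0 : c 0 ≤ v) (hm : v < c m) : ∃ i, i < m ∧ c i ≤ v ∧ v < c (i + 1) := by
  induction m with
  | zero => exact absurd (lt_of_le_of_lt h0 hm) (lt_irrefl _)
  | succ k ih =>
    rcases lt_or_ge v (c k) with h | h
    · obtain ⟨i, hi, h1, h2⟩ := ih (fun i hi => hmono i (by omega)) h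
      exact ⟨i, by omega, h1, h2⟩
    · exact ⟨k, by omega, h, hm⟩

lemma exists_min_gap {c : ℕ → ℝ} {m : ℕ} (hm : 0 < m)
    (hmono : ∀ i, i < m → c i < c (i + 1)) :
    ∃ G > 0, ∀ i, i < m → G ≤ c (i + 1) - c i := by
  induction m with
  | zero => exact absurd hm (lt_irrefl _)
  | succ k ih =>
    rcases Nat.eq_zero_or_pos k with hk | hk
    · subst hk
      refine ⟨c 1 - c 0, by linarith [hmono 0 (by omega)], ?_⟩
      intro i hi
      have : i = 0 := by omega
      subst this
      exact le_refl _
    · obtain ⟨G, hG, hGle⟩ := ih hk (fun i hi => hmono i (by omega))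
      refine ⟨min G (c (k + 1) - c k), lt_min hG (by linarith [hmono k (by omega)]), ?_⟩
      intro i hi
      rcases Nat.lt_or_ge i k with h | h
      · exact le_trans (min_le_left _ _) (hGle i h)
      · have : i = k := by omega
        subst this
        exact min_le_right _ _

/-- Uniform partitions for a `J₁`-convergent sequence of càdlàg functions. -/
lemma uniform_partitions
    (fn : ℕ → ℝ → F) (w : ℝ → F) (lam : ℕ → ℝ → ℝ)
    (hlam : ∀ n, StrictMono (lam n) ∧ Continuous (lam n) ∧ lam n 0 = 0 ∧
      Tendsto (lam n) atTop atTop)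
    (hconv : ∀ q > (0:ℝ), ∀ ε > (0:ℝ), ∃ N : ℕ, ∀ n ≥ N, ∀ t ∈ Icc (0:ℝ) q,
      |lam n t - t| ≤ ε ∧ ‖fn n (lam n t) - w t‖ ≤ ε)
    (hcad_r : ∀ n, ∀ t : ℝ, 0 ≤ t → ContinuousWithinAt (fn n) (Ici t) t)
    (hcad_l : ∀ n, ∀ t : ℝ, 0 < t → ∃ l, Tendsto (fn n) (nhdsWithin t (Iio t)) (nhds l))
    {T χ : ℝ} (hT : 0 < T) (hχ : 0 < χ) :
    ∃ (m : ℕ) (δ₀ Y : ℝ) (K : ℕ), 0 < m ∧ 0 < δ₀ ∧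
      ∀ n, n ≥ K → ∃ c : ℕ → ℝ,
        c 0 = 0 ∧ T - 1/2 ≤ c m ∧ (∀ i, i < m → c i + δ₀ ≤ c (i + 1)) ∧
        (∀ i, i ≤ m → ‖fn n (c i)‖ ≤ Y) ∧
        (∀ i, i < m → ∀ v ∈ Ico (c i) (c (i + 1)), ∀ v' ∈ Ico (c i) (c (i + 1)),
          ‖fn n v - fn n v'‖ ≤ χ) := by
  -- base index at tolerance χ/8
  obtain ⟨N₀, hN₀⟩ := hconv T hT (χ/8) (by positivity)
  -- the composed base function is càdlàg
  have hlam0 := hlam N₀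
  have hmono0 : StrictMono (lam N₀) := hlam0.1
  have hcont0 : Continuous (lam N₀) := hlam0.2.1
  have hcomp_r : ∀ t : ℝ, 0 ≤ t → ContinuousWithinAt (fun t => fn N₀ (lam N₀ t)) (Ici t) t := by
    intro t ht
    have h0 : (0:ℝ) ≤ lam N₀ t := by
      have := hmono0.monotone ht
      rwa [hlam0.2.2.1] at this
    refine ContinuousWithinAt.comp (hcad_r N₀ (lam N₀ t) h0)
      hcont0.continuousWithinAt ?_
    intro v hv
    exact hmono0.monotone hv
  have hcomp_l : ∀ t : ℝ, 0 < t →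
      ∃ l, Tendsto (fun t => fn N₀ (lam N₀ t)) (nhdsWithin t (Iio t)) (nhds l) := by
    intro t ht
    have h0 : (0:ℝ) < lam N₀ t := by
      have := hmono0 ht
      rwa [hlam0.2.2.1] at this
    obtain ⟨l, hlt⟩ := hcad_l N₀ (lam N₀ t) h0
    refine ⟨l, hlt.comp ?_⟩
    refine ContinuousWithinAt.tendsto_nhdsWithin hcont0.continuousWithinAt ?_
    intro v hv
    exact hmono0 hv
  -- partition of the base function at level χ/2
  obtain ⟨m, τ, hm, hτ0, hτm, hτmono, hτosc⟩ :=
    exists_partition hcomp_r hcomp_l hT (by positivity : (0:ℝ) < χ/2)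
  have hτmem : ∀ i, i ≤ m → τ i ∈ Icc (0:ℝ) T := by
    intro i hi
    constructor
    · have := part_mono hτmono 0 i (Nat.zero_le i) hi
      rwa [hτ0] at this
    · have := part_mono hτmono i m hi (le_refl m)
      rwa [hτm] at this
  -- minimal gap of the base partition
  have hgap := exists_min_gap hm hτmono
  obtain ⟨G, hG, hGle⟩ := hgap
  -- bound on the base values
  obtain ⟨Y₀, hY₀⟩ := exists_ubound (fun i => ‖w (τ i)‖) m
  -- second tolerance
  set e := min (χ/8) (min (G/4) (1/2)) with he
  have he_pos : 0 < e := by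
    apply lt_min (by positivity)
    exact lt_min (by positivity) (by norm_num)
  obtain ⟨N₁, hN₁⟩ := hconv T hT e he_pos
  refine ⟨m, G/2, Y₀ + χ, max N₀ N₁, hm, by positivity, ?_⟩
  intro n hn
  have hnN₀ : n ≥ N₀ := le_trans (le_max_left _ _) hn
  have hnN₁ : n ≥ N₁ := le_trans (le_max_right _ _) hn
  have hlamn := hlam n
  have hmonon : StrictMono (lam n) := hlamn.1
  have hcontn : Continuous (lam n) := hlamn.2.1
  refine ⟨fun i => lam n (τ i), ?_, ?_, ?_, ?_, ?_⟩
  · show lam n (τ 0) = 0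
    rw [hτ0]; exact hlamn.2.2.1
  · show T - 1/2 ≤ lam n (τ m)
    have hTm : T ∈ Icc (0:ℝ) T := ⟨hT.le, le_refl T⟩
    have := (hN₁ n hnN₁ T hTm).1
    rw [hτm]
    have h1 : e ≤ 1/2 := le_trans (min_le_right _ _) (min_le_right _ _)
    have h2 := abs_le.1 this
    linarith [h2.1]
  · intro i hi
    show lam n (τ i) + G/2 ≤ lam n (τ (i+1))
    have h1 := (hN₁ n hnN₁ (τ i) (hτmem i hi.le)).1
    have h2 := (hN₁ n hnN₁ (τ (i+1)) (hτmem (i+1) hi)).1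
    have h3 : G ≤ τ (i + 1) - τ i := hGle i hi
    have h4 : e ≤ G/4 := le_trans (min_le_right _ _) (min_le_left _ _)
    have h5 := abs_le.1 h1
    have h6 := abs_le.1 h2
    linarith [h5.1, h5.2, h6.1, h6.2]
  · intro i hi
    show ‖fn n (lam n (τ i))‖ ≤ Y₀ + χ
    have h1 := (hN₁ n hnN₁ (τ i) (hτmem i hi)).2
    have h2 : ‖fn n (lam n (τ i))‖ ≤ ‖w (τ i)‖ + e := by
      calc ‖fn n (lam n (τ i))‖
          = ‖(fn n (lam n (τ i)) - w (τ i)) + w (τ i)‖ := by rw [sub_add_cancel]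
        _ ≤ ‖fn n (lam n (τ i)) - w (τ i)‖ + ‖w (τ i)‖ := norm_add_le _ _
        _ ≤ e + ‖w (τ i)‖ := by linarith
        _ = ‖w (τ i)‖ + e := by ring
    have h3 : e ≤ χ/8 := min_le_left _ _
    have h4 := hY₀ i hi
    have h5 : χ/8 ≤ χ := by linarith
    calc ‖fn n (lam n (τ i))‖ ≤ ‖w (τ i)‖ + e := h2
      _ ≤ Y₀ + χ := by linarith
  · intro i hi v hv v' hv'
    simp only [] at hv hv'
    -- surjectivity of lam n on the cell
    have hsurj : ∀ z ∈ Ico (lam n (τ i)) (lam n (τ (i+1))),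
        ∃ t ∈ Ico (τ i) (τ (i + 1)), lam n t = z := by
      intro z hz
      have hle : τ i ≤ τ (i + 1) := (hτmono i hi).le
      have himage := intermediate_value_Icc hle hcontn.continuousOn
      have hzmem : z ∈ Icc (lam n (τ i)) (lam n (τ (i+1))) := ⟨hz.1, hz.2.le⟩
      obtain ⟨t, ht, hlt⟩ := himage hzmem
      refine ⟨t, ⟨ht.1, ?_⟩, hlt⟩
      by_contra hcon
      push_neg at hcon
      have : lam n (τ (i+1)) ≤ lam n t := hmonon.monotone hcon
      rw [hlt] at this
      exact absurd hz.2 (not_lt.2 this)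
    obtain ⟨t, ht, hlt⟩ := hsurj v hv
    obtain ⟨t', ht', hlt'⟩ := hsurj v' hv'
    have htm : t ∈ Icc (0:ℝ) T := ⟨(hτmem i hi.le).1.trans ht.1, ht.2.le.trans (hτmem (i+1) hi).2⟩
    have htm' : t' ∈ Icc (0:ℝ) T := ⟨(hτmem i hi.le).1.trans ht'.1, ht'.2.le.trans (hτmem (i+1) hi).2⟩
    have hb1 := (hN₁ n hnN₁ t htm).2
    have hb2 := (hN₁ n hnN₁ t' htm').2
    have hb3 := (hN₀ N₀ (le_refl N₀) t htm).2
    have hb4 := (hN₀ N₀ (le_refl N₀) t' htm').2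
    have hosc := hτosc i hi t ht t' ht'
    have he1 : e ≤ χ/8 := min_le_left _ _
    have t1 : dist (fn n (lam n t)) (fn n (lam n t'))
        ≤ dist (fn n (lam n t)) (w t) + dist (w t) (w t')
          + dist (w t') (fn n (lam n t')) := dist_triangle4 _ _ _ _
    have t2 : dist (w t) (w t')
        ≤ dist (w t) (fn N₀ (lam N₀ t)) + dist (fn N₀ (lam N₀ t)) (fn N₀ (lam N₀ t'))
          + dist (fn N₀ (lam N₀ t')) (w t') := dist_triangle4 _ _ _ _
    have e1 : dist (fn n (lam n t)) (w t) ≤ e := by rwa [dist_eq_norm]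
    have e2 : dist (w t') (fn n (lam n t')) ≤ e := by rwa [dist_comm, dist_eq_norm]
    have e3 : dist (w t) (fn N₀ (lam N₀ t)) ≤ χ/8 := by rwa [dist_comm, dist_eq_norm]
    have e4 : dist (fn N₀ (lam N₀ t')) (w t') ≤ χ/8 := by rwa [dist_eq_norm]
    have e5 : dist (fn N₀ (lam N₀ t)) (fn N₀ (lam N₀ t')) ≤ χ/2 := by
      rw [dist_eq_norm]; exact hosc
    have : ‖fn n v - fn n v'‖ = dist (fn n (lam n t)) (fn n (lam n t')) := by
      rw [hlt, hlt', dist_eq_norm]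
    rw [this]
    linarith

end M3

section M1
variable {d : ℕ}
local notation "Evec" => EuclideanSpace ℝ (Fin d)

lemma projOn_norm_le {C : Set Evec} {proj : Evec → Evec} (h : IsProjOn C proj)
    (z : Evec) {w : Evec} (hw : w ∈ C) : ‖z - proj z‖ ≤ ‖z - w‖ := by
  have := (h z).2 w hw
  rwa [dist_eq_norm, dist_eq_norm] at this

lemma projOn_inner_le {C : Set Evec} {proj : Evec → Evec} (hC : Convex ℝ C)
    (h : IsProjOn C proj) (z : Evec) {w : Evec} (hw : w ∈ C) :
    ⟪z - proj z, w - proj z⟫ ≤ 0 := by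
  have hpz : proj z ∈ C := (h z).1
  have : Nonempty C := ⟨⟨proj z, hpz⟩⟩
  have hb : BddBelow (Set.range fun w : C => ‖z - (w : Evec)‖) :=
    ⟨0, by rintro _ ⟨w, rfl⟩; exact norm_nonneg _⟩
  have heq : ‖z - proj z‖ = ⨅ w : C, ‖z - (w : Evec)‖ := by
    refine le_antisymm (le_ciInf fun w => projOn_norm_le h z w.2) ?_
    exact ciInf_le hb ⟨proj z, hpz⟩
  exact (norm_eq_iInf_iff_real_inner_le_zero hC hpz).1 heq w hw

lemma projOn_sq_le_inner {C : Set Evec} {proj : Evec → Evec} (hC : Convex ℝ C)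
    (h : IsProjOn C proj) (z : Evec) {b : Evec} (hb : b ∈ C) :
    ‖z - proj z‖ ^ 2 ≤ ⟪z - proj z, z - b⟫ := by
  have h1 : ⟪z - proj z, b - proj z⟫ ≤ 0 := projOn_inner_le hC h z hb
  have h2 : ⟪z - proj z, z - b⟫
      = ⟪z - proj z, z - proj z⟫ - ⟪z - proj z, b - proj z⟫ := by
    rw [← inner_sub_right]
    congr 1
    abel
  rw [h2, real_inner_self_eq_norm_sq]
  linarith

lemma projOn_ball_inner {C : Set Evec} {proj : Evec → Evec} (hC : Convex ℝ C)
    (h : IsProjOn C proj) {a : Evec} {r : ℝ} (hr : 0 < r)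
    (hball : Metric.closedBall a r ⊆ C) (z : Evec) :
    r * ‖z - proj z‖ + ‖z - proj z‖ ^ 2 ≤ ⟪z - proj z, z - a⟫ := by
  have ha : a ∈ C := hball (Metric.mem_closedBall_self hr.le)
  by_cases h0 : z - proj z = 0
  · rw [h0]; simp
  · set v := z - proj z with hv
    have hvn : 0 < ‖v‖ := norm_pos_iff.2 h0
    set w := a + (r / ‖v‖) • v with hw
    have hwC : w ∈ C := by
      apply hball
      rw [Metric.mem_closedBall, dist_eq_norm]
      have : w - a = (r / ‖v‖) • v := by rw [hw]; abel
      rw [this, norm_smul, Real.norm_eq_abs, abs_of_pos (by positivity)]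
      rw [div_mul_cancel₀ _ hvn.ne']
    have h1 : ⟪v, w - proj z⟫ ≤ 0 := projOn_inner_le hC h z hwC
    have h2 : ⟪v, w - proj z⟫ = ⟪v, a - proj z⟫ + (r / ‖v‖) * ⟪v, v⟫ := by
      have : w - proj z = (a - proj z) + (r / ‖v‖) • v := by rw [hw]; abel
      rw [this, inner_add_right, real_inner_smul_right]
    have h3 : ⟪v, v⟫ = ‖v‖ ^ 2 := real_inner_self_eq_norm_sq v
    have h4 : (r / ‖v‖) * ‖v‖ ^ 2 = r * ‖v‖ := by field_simp
    have h5 : ⟪v, a - proj z⟫ ≤ -(r * ‖v‖) := by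
      rw [h2, h3, h4] at h1; linarith
    have h6 : ⟪v, z - a⟫ = ⟪v, z - proj z⟫ - ⟪v, a - proj z⟫ := by
      rw [← inner_sub_right]; congr 1; abel
    rw [h6, ← hv, h3]
    linarith

lemma projOn_dist_lip {C : Set Evec} {proj : Evec → Evec} (h : IsProjOn C proj)
    (p q : Evec) : ‖p - proj p‖ ≤ ‖q - proj q‖ + ‖p - q‖ := by
  have h1 : ‖p - proj p‖ ≤ ‖p - proj q‖ := projOn_norm_le h p (h q).1
  have h2 : ‖p - proj q‖ ≤ ‖p - q‖ + ‖q - proj q‖ := by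
    have : p - proj q = (p - q) + (q - proj q) := by abel
    rw [this]; exact norm_add_le _ _
  linarith

end M1


section M5
variable {d : ℕ}
local notation "Evec" => EuclideanSpace ℝ (Fin d)

lemma projOn_norm_lipschitz {C : Set Evec} {proj : Evec → Evec} (hproj : IsProjOn C proj) :
    Continuous (fun z : Evec => ‖z - proj z‖) := by
  refine (LipschitzWith.of_dist_le_mul (K := 1) ?_).continuous
  intro p q
  rw [NNReal.coe_one, one_mul, Real.dist_eq, dist_eq_norm, abs_sub_le_iff]
  constructor
  · linarith [projOn_dist_lip hproj p q]
  · have := projOn_dist_lip hproj q p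
    rw [norm_sub_rev q p] at this
    linarith

lemma coreVar {C : Set Evec} {proj : Evec → Evec} (hC : Convex ℝ C) (hproj : IsProjOn C proj)
    {a : Evec} {r : ℝ} (hr : 0 < r) (hball : Metric.closedBall a r ⊆ C)
    {x y g f : ℝ → Evec} {cr : ℝ} (hcr : 0 ≤ cr)
    (hf : ∀ v, f v = x v - proj (x v))
    (hxg : ∀ v, 0 ≤ v → x v = y v + g v)
    (hgdiff : ∀ σ τ : ℝ, 0 ≤ σ → σ ≤ τ → g τ = g σ - cr • ∫ w in Ioc σ τ, f w)
    {α τ : ℝ} (hα : 0 ≤ α) (hατ : α ≤ τ)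
    (hfint : IntegrableOn f (Ioc α τ))
    (hosc : ∀ v ∈ Ioo α τ, ‖y v - y α‖ ≤ r / 2) :
    cr * ∫ v in Ioc α τ, ‖f v‖ ≤ ‖x α - a‖ ^ 2 / r := by
  set P : ℝ → Evec := fun v => g v + y α with hP
  have hPeq : ∀ v ∈ Icc α τ, P v = P α - cr • ∫ w in Ioc α v, f w := by
    intro v hv
    show g v + y α = (g α + y α) - cr • ∫ w in Ioc α v, f w
    rw [hgdiff α v hα hv.1]
    abel
  have hB : IntegrableOn (fun v => (r / 2) * ‖f v‖) (Ioc α τ) := hfint.norm.const_mul _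
  have hbd : ∀ v ∈ Ioo α τ, (r / 2) * ‖f v‖ ≤ ⟪f v, P v - a⟫ := by
    intro v hv
    have hv0 : (0:ℝ) ≤ v := le_trans hα hv.1.le
    have hgv : g v = x v - y v := by rw [hxg v hv0]; abel
    have hPv : P v - a = (x v - a) - (y v - y α) := by
      show g v + y α - a = (x v - a) - (y v - y α)
      rw [hgv]; abel
    have hball_inner := projOn_ball_inner hC hproj hr hball (x v)
    rw [← hf v] at hball_inner
    have hyosc := hosc v hv
    have hinner2 : ⟪f v, y v - y α⟫ ≤ ‖f v‖ * (r / 2) := by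
      calc ⟪f v, y v - y α⟫ ≤ ‖f v‖ * ‖y v - y α‖ := real_inner_le_norm _ _
        _ ≤ ‖f v‖ * (r / 2) := mul_le_mul_of_nonneg_left hyosc (norm_nonneg _)
    have hsplit : ⟪f v, P v - a⟫ = ⟪f v, x v - a⟫ - ⟪f v, y v - y α⟫ := by
      rw [hPv, inner_sub_right]
    rw [hsplit]
    nlinarith [norm_nonneg (f v), sq_nonneg ‖f v‖]
  have hev := evol_le hατ hfint hcr P a hPeq hB hbd
  have hPα : P α = x α := by
    show g α + y α = x α
    rw [hxg α hα]; abel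
  have hIpull : ∫ v in Ioc α τ, (r / 2) * ‖f v‖ = (r / 2) * ∫ v in Ioc α τ, ‖f v‖ := by
    simpa [smul_eq_mul] using
      integral_smul (μ := volume.restrict (Ioc α τ)) (r / 2) (fun v => ‖f v‖)
  rw [hPα, hIpull] at hev
  rw [le_div_iff₀ hr]
  nlinarith [sq_nonneg ‖P τ - a‖]

lemma corePersist {C : Set Evec} {proj : Evec → Evec} (hC : Convex ℝ C) (hproj : IsProjOn C proj)
    {x y g f : ℝ → Evec} {cr : ℝ} (hcr : 0 ≤ cr)
    (hf : ∀ v, f v = x v - proj (x v))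
    (hxg : ∀ v, 0 ≤ v → x v = y v + g v)
    (hgdiff : ∀ σ τ : ℝ, 0 ≤ σ → σ ≤ τ → g τ = g σ - cr • ∫ w in Ioc σ τ, f w)
    {v₀ s η : ℝ} (hv0 : 0 ≤ v₀) (hv0s : v₀ ≤ s) (hη : 0 ≤ η)
    (hfint : IntegrableOn f (Ioc v₀ s))
    (hgc : ContinuousOn g (Icc v₀ s))
    (hosc : ∀ v ∈ Icc v₀ s, ‖y v - y v₀‖ ≤ η) :
    ‖(g s + y v₀) - proj (g s + y v₀)‖
      ≤ max ‖(g v₀ + y v₀) - proj (g v₀ + y v₀)‖ (4 * η) := by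
  set uu : ℝ → ℝ := fun v => ‖(g v + y v₀) - proj (g v + y v₀)‖ with huu
  have huc : ContinuousOn uu (Icc v₀ s) := by
    have h1 : ContinuousOn (fun v => g v + y v₀) (Icc v₀ s) := hgc.add continuousOn_const
    exact (projOn_norm_lipschitz hproj).comp_continuousOn h1
  have step : ∀ σ τ : ℝ, v₀ ≤ σ → σ ≤ τ → τ ≤ s →
      (∀ v ∈ Ioo σ τ, 4 * η ≤ uu v) → uu τ ≤ uu σ := by
    intro σ τ h1 h2 h3 h4
    set P : ℝ → Evec := fun v => g v + y v₀ with hP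
    have hσ0 : 0 ≤ σ := le_trans hv0 h1
    have hPeq : ∀ v ∈ Icc σ τ, P v = P σ - cr • ∫ w in Ioc σ v, f w := by
      intro v hv
      show g v + y v₀ = (g σ + y v₀) - cr • ∫ w in Ioc σ v, f w
      rw [hgdiff σ v hσ0 hv.1]
      abel
    have hb : proj (P σ) ∈ C := (hproj (P σ)).1
    have hbd : ∀ v ∈ Ioo σ τ, (0:ℝ) ≤ ⟪f v, P v - proj (P σ)⟫ := by
      intro v hv
      have hv0' : (0:ℝ) ≤ v := le_trans hσ0 hv.1.le
      have hvI : v ∈ Icc v₀ s := ⟨le_trans h1 hv.1.le, le_trans hv.2.le h3⟩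
      have hyv := hosc v hvI
      have hgv : g v = x v - y v := by rw [hxg v hv0']; abel
      have hfd : uu v ≤ ‖f v‖ + η := by
        have hlip := projOn_dist_lip hproj (g v + y v₀) (x v)
        have hpx : (g v + y v₀) - x v = y v₀ - y v := by rw [hgv]; abel
        rw [hpx, ← hf v, norm_sub_rev (y v₀) (y v)] at hlip
        calc uu v = ‖(g v + y v₀) - proj (g v + y v₀)‖ := rfl
          _ ≤ ‖f v‖ + ‖y v - y v₀‖ := hlip
          _ ≤ ‖f v‖ + η := by linarith
      have h4v := h4 v hv
      have hfv_lb : η ≤ ‖f v‖ := by linarith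
      have hsq := projOn_sq_le_inner hC hproj (x v) hb
      rw [← hf v] at hsq
      have hPv : P v - proj (P σ) = (x v - proj (P σ)) - (y v - y v₀) := by
        show g v + y v₀ - proj (P σ) = (x v - proj (P σ)) - (y v - y v₀)
        rw [hgv]; abel
      have hinner2 : ⟪f v, y v - y v₀⟫ ≤ ‖f v‖ * η := by
        calc ⟪f v, y v - y v₀⟫ ≤ ‖f v‖ * ‖y v - y v₀‖ := real_inner_le_norm _ _
          _ ≤ ‖f v‖ * η := mul_le_mul_of_nonneg_left hyv (norm_nonneg _)
      have hsplit : ⟪f v, P v - proj (P σ)⟫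
          = ⟪f v, x v - proj (P σ)⟫ - ⟪f v, y v - y v₀⟫ := by
        rw [hPv, inner_sub_right]
      rw [hsplit]
      nlinarith [norm_nonneg (f v)]
    have hB0 : IntegrableOn (fun _ : ℝ => (0:ℝ)) (Ioc σ τ) := by
      simp [integrableOn_const]
    have hfint' : IntegrableOn f (Ioc σ τ) :=
      hfint.mono_set (Ioc_subset_Ioc h1 h3)
    have hev := evol_le h2 hfint' hcr P (proj (P σ)) hPeq hB0 hbd
    rw [integral_zero] at hev
    have h5 : uu τ ≤ ‖P τ - proj (P σ)‖ := projOn_norm_le hproj (P τ) hb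
    have h6 : ‖P σ - proj (P σ)‖ = uu σ := rfl
    rw [h6] at hev
    have h7 : 0 ≤ uu τ := norm_nonneg _
    have h8 : 0 ≤ uu σ := norm_nonneg _
    nlinarith [norm_nonneg (P τ - proj (P σ)), h5]
  by_contra hcon
  push_neg at hcon
  set M := max (uu v₀) (4 * η) with hM
  have hM4 : 4 * η ≤ M := le_max_right _ _
  set A : Set ℝ := Icc v₀ s ∩ uu ⁻¹' (Iic M) with hA
  have hAclosed : IsClosed A :=
    huc.preimage_isClosed_of_isClosed isClosed_Icc isClosed_Iic
  have hAne : A.Nonempty := by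
    refine ⟨v₀, ⟨⟨le_refl _, hv0s⟩, ?_⟩⟩
    show uu v₀ ≤ M
    exact le_max_left _ _
  have hAbdd : BddAbove A := ⟨s, fun t ht => ht.1.2⟩
  have hσA : sSup A ∈ A := hAclosed.csSup_mem hAne hAbdd
  have hσs : sSup A ≤ s := hσA.1.2
  have hstep := step (sSup A) s hσA.1.1 hσs (le_refl s) ?_
  · exact absurd (le_trans hstep hσA.2) (not_le.2 hcon)
  · intro v hv
    by_contra hv4
    push_neg at hv4
    have hvA : v ∈ A := by
      refine ⟨⟨le_trans hσA.1.1 hv.1.le, hv.2.le⟩, ?_⟩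
      show uu v ≤ M
      exact le_trans hv4.le hM4
    have := le_csSup hAbdd hvA
    exact absurd hv.1 (not_lt.2 this)


lemma coreOsc {C : Set Evec} {proj : Evec → Evec} (hC : Convex ℝ C) (hproj : IsProjOn C proj)
    {x y g f : ℝ → Evec} {cr : ℝ} (hcr : 0 < cr)
    (hf : ∀ v, f v = x v - proj (x v))
    (hxg : ∀ v, 0 ≤ v → x v = y v + g v)
    (hgdiff : ∀ σ τ : ℝ, 0 ≤ σ → σ ≤ τ → g τ = g σ - cr • ∫ w in Ioc σ τ, f w)
    {α β s u θ η V : ℝ} (hα : 0 ≤ α) (hθ : 0 < θ) (hη : 0 < η) (hV : 0 < V)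
    (hsθ : α ≤ s - θ) (hsu : s ≤ u) (huβ : u < β)
    (hoscy : ∀ v ∈ Ico α β, ∀ v' ∈ Ico α β, ‖y v - y v'‖ ≤ η)
    (hfint : IntegrableOn f (Ioc (s - θ) u))
    (hgc : ContinuousOn g (Icc (s - θ) s))
    (hV1 : cr * ∫ v in Ioc (s - θ) s, ‖f v‖ ≤ V)
    (hV2 : cr * ∫ v in Ioc s u, ‖f v‖ ≤ V)
    (hsmall : 2 * V / (cr * θ) ≤ η) :
    ‖x u - x s‖ ≤ 11 * η + Real.sqrt (2 * η * V) := by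
  have hsθ0 : (0:ℝ) ≤ s - θ := le_trans hα hsθ
  have hss : s - θ ≤ s := by linarith
  have hs0 : (0:ℝ) ≤ s := le_trans hsθ0 hss
  have hu0 : (0:ℝ) ≤ u := le_trans hs0 hsu
  have hfint1 : IntegrableOn f (Ioc (s - θ) s) :=
    hfint.mono_set (Ioc_subset_Ioc (le_refl _) hsu)
  have hfint2 : IntegrableOn f (Ioc s u) :=
    hfint.mono_set (Ioc_subset_Ioc hss (le_refl _))
  have hsmem : s ∈ Ico α β := ⟨by linarith, lt_of_le_of_lt hsu huβ⟩
  -- Step 1: find a time with small penalization value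
  have hv₀ : ∃ v₀ ∈ Icc (s - θ) s, ‖f v₀‖ ≤ 2 * V / (cr * θ) := by
    by_contra hcon
    push_neg at hcon
    have hlb : ∀ v ∈ Ioc (s - θ) s, 2 * V / (cr * θ) ≤ ‖f v‖ := fun v hv =>
      (hcon v ⟨hv.1.le, hv.2⟩).le
    have hcint : IntegrableOn (fun _ : ℝ => 2 * V / (cr * θ)) (Ioc (s - θ) s) :=
      integrableOn_const measure_Ioc_lt_top.ne
    have hint := setIntegral_mono_on hcint hfint1.norm measurableSet_Ioc hlb
    have hconst : ∫ _ in Ioc (s - θ) s, (2 * V / (cr * θ)) = θ * (2 * V / (cr * θ)) := by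
      rw [setIntegral_const, measureReal_def, Real.volume_Ioc, smul_eq_mul]
      congr 1
      rw [ENNReal.toReal_ofReal (by linarith : (0:ℝ) ≤ s - (s - θ))]
      ring
    rw [hconst] at hint
    have h2V : cr * (θ * (2 * V / (cr * θ))) = 2 * V := by
      field_simp
    have : 2 * V ≤ V := by
      calc 2 * V = cr * (θ * (2 * V / (cr * θ))) := h2V.symm
        _ ≤ cr * ∫ v in Ioc (s - θ) s, ‖f v‖ :=
            mul_le_mul_of_nonneg_left hint hcr.le
        _ ≤ V := hV1
    linarith
  obtain ⟨v₀, hv₀mem, hv₀f⟩ := hv₀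
  have hv₀0 : (0:ℝ) ≤ v₀ := le_trans hsθ0 hv₀mem.1
  -- Step 2: persistence on [v₀, s]
  have hoscP : ∀ v ∈ Icc v₀ s, ‖y v - y v₀‖ ≤ η := by
    intro v hv
    exact hoscy v ⟨le_trans hsθ (le_trans hv₀mem.1 hv.1),
        lt_of_le_of_lt (le_trans hv.2 hsu) huβ⟩
      v₀ ⟨le_trans hsθ hv₀mem.1, lt_of_le_of_lt (le_trans hv₀mem.2 hsu) huβ⟩
  have hpers := corePersist hC hproj hcr.le hf hxg hgdiff hv₀0 hv₀mem.2 hη.le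
    (hfint1.mono_set (Ioc_subset_Ioc hv₀mem.1 (le_refl _)))
    (hgc.mono (Icc_subset_Icc hv₀mem.1 (le_refl _))) hoscP
  have hxv₀ : g v₀ + y v₀ = x v₀ := by rw [hxg v₀ hv₀0]; abel
  have hus : ‖(g s + y v₀) - proj (g s + y v₀)‖ ≤ 4 * η := by
    have h1 : ‖(g v₀ + y v₀) - proj (g v₀ + y v₀)‖ = ‖f v₀‖ := by
      rw [hxv₀, hf v₀]
    rw [h1] at hpers
    have h2 : ‖f v₀‖ ≤ η := le_trans hv₀f hsmall
    calc ‖(g s + y v₀) - proj (g s + y v₀)‖ ≤ max ‖f v₀‖ (4 * η) := hpers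
      _ ≤ 4 * η := max_le (by linarith) (le_refl _)
  -- Step 3: the distance of x s to the domain is small
  have hds : ‖f s‖ ≤ 5 * η := by
    have hlip := projOn_dist_lip hproj (x s) (g s + y v₀)
    have hpx : x s - (g s + y v₀) = y s - y v₀ := by rw [hxg s hs0]; abel
    rw [hpx] at hlip
    have hys : ‖y s - y v₀‖ ≤ η := hoscP s ⟨hv₀mem.2, le_refl s⟩
    rw [hf s]
    linarith
  -- Step 4: evolution on [s, u]
  set P : ℝ → Evec := fun v => g v + y s with hPdef
  have hPeq : ∀ v ∈ Icc s u, P v = P s - cr • ∫ w in Ioc s v, f w := by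
    intro v hv
    show g v + y s = (g s + y s) - cr • ∫ w in Ioc s v, f w
    rw [hgdiff s v hs0 hv.1]
    abel
  have hb : proj (x s) ∈ C := (hproj (x s)).1
  have hB : IntegrableOn (fun v => -(η * ‖f v‖)) (Ioc s u) :=
    (hfint2.norm.const_mul η).neg
  have hbd : ∀ v ∈ Ioo s u, -(η * ‖f v‖) ≤ ⟪f v, P v - proj (x s)⟫ := by
    intro v hv
    have hv0' : (0:ℝ) ≤ v := le_trans hs0 hv.1.le
    have hsq := projOn_sq_le_inner hC hproj (x v) hb
    rw [← hf v] at hsq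
    have hyv : ‖y v - y s‖ ≤ η :=
      hoscy v ⟨by linarith [hv.1], lt_trans hv.2 (lt_of_le_of_lt (le_refl u) huβ)⟩ s hsmem
    have hgv : g v = x v - y v := by rw [hxg v hv0']; abel
    have hPv : P v - proj (x s) = (x v - proj (x s)) - (y v - y s) := by
      show g v + y s - proj (x s) = (x v - proj (x s)) - (y v - y s)
      rw [hgv]; abel
    have hinner2 : ⟪f v, y v - y s⟫ ≤ ‖f v‖ * η := by
      calc ⟪f v, y v - y s⟫ ≤ ‖f v‖ * ‖y v - y s‖ := real_inner_le_norm _ _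
        _ ≤ ‖f v‖ * η := mul_le_mul_of_nonneg_left hyv (norm_nonneg _)
    have hsplit : ⟪f v, P v - proj (x s)⟫
        = ⟪f v, x v - proj (x s)⟫ - ⟪f v, y v - y s⟫ := by
      rw [hPv, inner_sub_right]
    rw [hsplit]
    nlinarith [norm_nonneg (f v), sq_nonneg ‖f v‖]
  have hev := evol_le hsu hfint2 hcr.le P (proj (x s)) hPeq hB hbd
  have hIpull : ∫ v in Ioc s u, -(η * ‖f v‖) = -(η * ∫ v in Ioc s u, ‖f v‖) := by
    rw [integral_neg]
    congr 1
    simpa [smul_eq_mul] using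
      integral_smul (μ := volume.restrict (Ioc s u)) η (fun v => ‖f v‖)
  rw [hIpull] at hev
  have hPs : P s = x s := by
    show g s + y s = x s
    rw [hxg s hs0]; abel
  rw [hPs] at hev
  have hxspr : ‖x s - proj (x s)‖ = ‖f s‖ := by rw [hf s]
  rw [hxspr] at hev
  have hR : ‖P u - proj (x s)‖ ^ 2 ≤ ‖f s‖ ^ 2 + 2 * η * V := by
    have h2 : 2 * η * (cr * ∫ v in Ioc s u, ‖f v‖) ≤ 2 * η * V :=
      mul_le_mul_of_nonneg_left hV2 (by positivity)
    nlinarith [hev]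
  have hPu_norm : ‖P u - proj (x s)‖ ≤ ‖f s‖ + Real.sqrt (2 * η * V) := by
    have h2 : ‖P u - proj (x s)‖ ^ 2 ≤ (‖f s‖ + Real.sqrt (2 * η * V)) ^ 2 := by
      have hsq2V := Real.sq_sqrt (show (0:ℝ) ≤ 2 * η * V by positivity)
      nlinarith [Real.sqrt_nonneg (2 * η * V), norm_nonneg (f s)]
    have h3 : (0:ℝ) ≤ ‖f s‖ + Real.sqrt (2 * η * V) := by positivity
    calc ‖P u - proj (x s)‖ = Real.sqrt (‖P u - proj (x s)‖ ^ 2) :=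
          (Real.sqrt_sq (norm_nonneg _)).symm
      _ ≤ Real.sqrt ((‖f s‖ + Real.sqrt (2 * η * V)) ^ 2) := Real.sqrt_le_sqrt h2
      _ = ‖f s‖ + Real.sqrt (2 * η * V) := Real.sqrt_sq h3
  -- final assembly
  have hxu : x u - x s = (y u - y s) + ((P u - proj (x s)) - (x s - proj (x s))) := by
    have h1 : P u - P s = g u - g s := by
      show (g u + y s) - (g s + y s) = g u - g s
      abel
    have h2 : x u - x s = (y u - y s) + (g u - g s) := by
      rw [hxg u hu0, hxg s hs0]; abel
    rw [h2, ← h1, hPs]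
    abel
  have hyus : ‖y u - y s‖ ≤ η :=
    hoscy u ⟨by linarith, huβ⟩ s hsmem
  calc ‖x u - x s‖
      = ‖(y u - y s) + ((P u - proj (x s)) - (x s - proj (x s)))‖ := by rw [hxu]
    _ ≤ ‖y u - y s‖ + ‖(P u - proj (x s)) - (x s - proj (x s))‖ := norm_add_le _ _
    _ ≤ ‖y u - y s‖ + (‖P u - proj (x s)‖ + ‖x s - proj (x s)‖) := by
        linarith [norm_sub_le (P u - proj (x s)) (x s - proj (x s))]
    _ ≤ η + ((‖f s‖ + Real.sqrt (2 * η * V)) + ‖f s‖) := by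
        rw [hxspr]
        linarith
    _ ≤ 11 * η + Real.sqrt (2 * η * V) := by
        linarith

end M5

end Stmt13Aux

/-- Corollary 2.6: no oscillations of `x^n` precede oscillations of `z^n`
(`lim_{δ↓0} limsup_n ω̄''_{(x^n, z^n)}(δ, q) = 0`), when `{(y^n, z^n)}` is relatively
compact in the `J₁` topology. -/
theorem stmt13 (d : ℕ) (D : Set (EuclideanSpace ℝ (Fin d)))
    (hD : IsOpen D) (hconv : Convex ℝ D) (hne : D.Nonempty)
    (proj : EuclideanSpace ℝ (Fin d) → EuclideanSpace ℝ (Fin d))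
    (hproj : IsProjOn (closure D) proj)
    (yn zn : ℕ → ℝ → EuclideanSpace ℝ (Fin d))
    (hyn : ∀ n, Cadlag (yn n)) (hzn : ∀ n, Cadlag (zn n))
    (hyn0 : ∀ n, yn n 0 ∈ closure D)
    (hcomp : ∀ φ : ℕ → ℕ, StrictMono φ →
      ∃ ψ : ℕ → ℕ, StrictMono ψ ∧
      ∃ w : ℝ → EuclideanSpace ℝ (Fin d) × EuclideanSpace ℝ (Fin d),
        J1Tendsto (fun n => fun t => (yn (φ (ψ n)) t, zn (φ (ψ n)) t)) w)
    (xn : ℕ → ℝ → EuclideanSpace ℝ (Fin d))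
    (hxn : ∀ n : ℕ, PenalizedSol proj (n : ℝ) (yn n) (xn n)) :
    ∀ q : ℝ, 0 ≤ q → ∀ ε > (0:ℝ), ∃ δ > (0:ℝ), ∃ N : ℕ, ∀ n ≥ N,
      ∀ s u t : ℝ, 0 ≤ s → s < u → u < t → t ≤ q → t - s < δ →
        min ‖xn n u - xn n s‖ ‖zn n t - zn n u‖ ≤ ε := by
    classical
  intro q hq ε hε
  by_contra hcon
  push_neg at hcon
  set C : Set (EuclideanSpace ℝ (Fin d)) := closure D with hCdef
  have hC : Convex ℝ C := hconv.closure
  obtain ⟨a, haD⟩ := hne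
  obtain ⟨r0, hr0, hball0⟩ := Metric.isOpen_iff.1 hD a haD
  set r : ℝ := r0 / 2 with hrdef
  have hr : 0 < r := by positivity
  have hball : Metric.closedBall a r ⊆ C := by
    intro p hp
    refine subset_closure (hball0 ?_)
    rw [Metric.mem_closedBall] at hp
    rw [Metric.mem_ball]
    calc dist p a ≤ r := hp
      _ < r0 := by rw [hrdef]; linarith only [hr0]
  set Bad : ℕ → ℕ → Prop := fun n j => ∃ s u t : ℝ,
    0 ≤ s ∧ s < u ∧ u < t ∧ t ≤ q ∧ t - s < 1 / (j + 1) ∧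
    ε < min ‖xn n u - xn n s‖ ‖zn n t - zn n u‖ with hBadDef
  have hbad : ∀ N j : ℕ, ∃ n, N ≤ n ∧ Bad n j := by
    intro N j
    have hpos : (0:ℝ) < 1 / (j + 1) := by positivity
    obtain ⟨n, hn, s, u, t, h1, h2, h3, h4, h5, h6⟩ := hcon (1 / (j + 1)) hpos N
    exact ⟨n, hn, s, u, t, h1, h2, h3, h4, h5, h6⟩
  choose nf hge hb using hbad
  set F : ℕ → ℕ := fun j => Nat.rec (nf 0 0) (fun j prev => nf (prev + 1) (j + 1)) j
    with hFdef
  have hFsucc : ∀ j, F (j + 1) = nf (F j + 1) (j + 1) := fun j => rfl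
  have hFmono : StrictMono F := by
    apply strictMono_nat_of_lt_succ
    intro j
    have := hge (F j + 1) (j + 1)
    rw [hFsucc j]
    omega
  have hFbad : ∀ j, Bad (F j) j := by
    intro j
    cases j with
    | zero => exact hb 0 0
    | succ i => exact hb (F i + 1) (i + 1)
  obtain ⟨ψ, hψ, w, hJ⟩ := hcomp F hFmono
  obtain ⟨lam, hlamP, hlamC⟩ := hJ
  set nseq : ℕ → ℕ := fun k => F (ψ k) with hnseqdef
  have hnseq_ge : ∀ k, k ≤ nseq k := fun k =>
    le_trans hψ.le_apply hFmono.le_apply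
  set fnP : ℕ → ℝ → (EuclideanSpace ℝ (Fin d)) × (EuclideanSpace ℝ (Fin d)) :=
    fun k t => (yn (nseq k) t, zn (nseq k) t) with hfnPdef
  have hcad_r : ∀ k, ∀ t : ℝ, 0 ≤ t → ContinuousWithinAt (fnP k) (Set.Ici t) t :=
    fun k t ht => ((hyn (nseq k)).1 t ht).prodMk ((hzn (nseq k)).1 t ht)
  have hcad_l : ∀ k, ∀ t : ℝ, 0 < t →
      ∃ l, Filter.Tendsto (fnP k) (nhdsWithin t (Set.Iio t)) (nhds l) := by
    intro k t ht
    obtain ⟨l1, hl1⟩ := (hyn (nseq k)).2 t ht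
    obtain ⟨l2, hl2⟩ := (hzn (nseq k)).2 t ht
    exact ⟨(l1, l2), hl1.prodMk_nhds hl2⟩
  have hT : (0:ℝ) < q + 1 := by linarith only [hq]
  obtain ⟨m₀, δc, Yc, Kc, hm₀, hδc, hcoarse⟩ :=
    Stmt13Aux.uniform_partitions fnP w lam hlamP hlamC hcad_r hcad_l hT
      (by positivity : (0:ℝ) < r / 2)
  set R : ℝ := Yc + ‖a‖ with hRdef
  set Tr : ℕ → ℝ := fun i => Nat.rec 0 (fun _ prev => prev + (R + prev) ^ 2 / r) i
    with hTrdef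
  have hTr0 : Tr 0 = 0 := rfl
  have hTrsucc : ∀ i, Tr (i + 1) = Tr i + (R + Tr i) ^ 2 / r := fun i => rfl
  have hTrnn : ∀ i, 0 ≤ Tr i := by
    intro i
    induction i with
    | zero => exact le_refl _
    | succ j ih =>
      rw [hTrsucc j]
      have : 0 ≤ (R + Tr j) ^ 2 / r := by positivity
      linarith only [ih, this]
  set V : ℝ := Tr m₀ + 1 with hVdef
  have hV : 0 < V := by
    have := hTrnn m₀
    rw [hVdef]
    linarith only [this]
  set η : ℝ := min (ε / 22) (ε ^ 2 / (8 * V)) with hηdef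
  have hη : 0 < η := lt_min (by positivity) (by positivity)
  have hη22 : η ≤ ε / 22 := min_le_left _ _
  have hη8V : η ≤ ε ^ 2 / (8 * V) := min_le_right _ _
  obtain ⟨m₁, G, Yf, Kf, hm₁, hG, hfine⟩ :=
    Stmt13Aux.uniform_partitions fnP w lam hlamP hlamC hcad_r hcad_l hT hη
  set θ : ℝ := G / 4 with hθdef
  have hθ : 0 < θ := by positivity
  obtain ⟨Kn, hKn⟩ := exists_nat_ge (2 * V / (θ * η))
  obtain ⟨Kd, hKd⟩ := exists_nat_ge (4 / G)
  set k : ℕ := max (max Kc Kf) (max Kn (Kd + 1)) with hkdef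
  set n : ℕ := nseq k with hndef
  have hkKc : Kc ≤ k := le_trans (le_max_left _ _) (le_max_left _ _)
  have hkKf : Kf ≤ k := le_trans (le_max_right _ _) (le_max_left _ _)
  have hkKn : Kn ≤ k := le_trans (le_max_left _ _) (le_max_right _ _)
  have hkKd : Kd + 1 ≤ k := le_trans (le_max_right _ _) (le_max_right _ _)
  set cr : ℝ := (n : ℝ) with hcrdef
  have hcrk : (k : ℝ) ≤ cr := by
    rw [hcrdef, hndef]
    exact_mod_cast hnseq_ge k
  have hcr_large : 2 * V / (θ * η) ≤ cr :=
    le_trans hKn (le_trans (by exact_mod_cast hkKn) hcrk)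
  have hcr : 0 < cr := by
    have h1 : (0:ℝ) < 2 * V / (θ * η) := by positivity
    linarith only [h1, hcr_large]
  clear_value r R Tr V η θ cr k
  -- per-n data
  set x : ℝ → EuclideanSpace ℝ (Fin d) := xn n with hxdef
  set y : ℝ → EuclideanSpace ℝ (Fin d) := yn n with hydef
  set z : ℝ → EuclideanSpace ℝ (Fin d) := zn n with hzdef
  set f : ℝ → EuclideanSpace ℝ (Fin d) := fun v => x v - proj (x v) with hfdef
  set g : ℝ → EuclideanSpace ℝ (Fin d) := fun t => x t - y t with hgdef
  have hpen := hxn n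
  have hf : ∀ v, f v = x v - proj (x v) := fun v => rfl
  have hxg : ∀ v : ℝ, 0 ≤ v → x v = y v + g v := by
    intro v hv
    show x v = y v + (x v - y v)
    abel
  have hfint : ∀ σ τ : ℝ, 0 ≤ σ → σ ≤ τ → IntegrableOn f (Set.Ioc σ τ) := by
    intro σ τ h1 h2
    have h3 := hpen.1 τ (le_trans h1 h2)
    rw [← hxdef] at h3
    exact h3.1.mono_set (Set.Ioc_subset_Ioc h1 (le_refl τ))
  have hgeq : ∀ t : ℝ, 0 ≤ t → g t = -(cr • ∫ v in Set.Ioc 0 t, f v) := by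
    intro t ht
    have h1 := hpen.2 t ht
    rw [← hxdef, ← hydef, ← hcrdef, intervalIntegral.integral_of_le ht] at h1
    have h3 : ∫ v in Set.Ioc 0 t, (x v - proj (x v)) = ∫ v in Set.Ioc 0 t, f v := rfl
    rw [h3] at h1
    show x t - y t = _
    rw [h1]
    abel
  have hgdiff : ∀ σ τ : ℝ, 0 ≤ σ → σ ≤ τ → g τ = g σ - cr • ∫ v in Set.Ioc σ τ, f v := by
    intro σ τ h1 h2
    have h0τ : (0:ℝ) ≤ τ := le_trans h1 h2
    rw [hgeq τ h0τ, hgeq σ h1]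
    have hsplit : ∫ v in Set.Ioc 0 τ, f v
        = (∫ v in Set.Ioc 0 σ, f v) + ∫ v in Set.Ioc σ τ, f v := by
      rw [← MeasureTheory.setIntegral_union (Set.Ioc_disjoint_Ioc_of_le le_rfl) measurableSet_Ioc
        (hfint 0 σ (le_refl 0) h1) (hfint σ τ h1 h2), Set.Ioc_union_Ioc_eq_Ioc h1 h2]
    rw [hsplit, smul_add]
    abel
  have hgc : ∀ Λ : ℝ, ContinuousOn g (Set.Icc 0 Λ) := by
    intro Λ
    rcases le_or_gt 0 Λ with hΛ | hΛ
    · have h1 : ContinuousOn (fun t => -(cr • ∫ v in Set.Ioc 0 t, f v)) (Set.Icc 0 Λ) :=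
        ((Stmt13Aux.continuousOn_primitive'' (hfint 0 Λ (le_refl 0) hΛ)).const_smul cr).neg
      exact h1.congr fun t ht => hgeq t ht.1
    · rw [Set.Icc_eq_empty (by linarith : ¬ (0:ℝ) ≤ Λ)]
      exact continuousOn_empty g
  -- coarse partition and uniform variation bound
  obtain ⟨cc, hcc0, hccm, hccgap, hccval, hccosc⟩ := hcoarse k hkKc
  have hccmono : ∀ i, i < m₀ → cc i < cc (i + 1) := fun i hi => by
    have := hccgap i hi; linarith only [this, hδc]
  have hccnn : ∀ i, i ≤ m₀ → 0 ≤ cc i := by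
    intro i hi
    have := Stmt13Aux.part_mono hccmono 0 i (Nat.zero_le i) hi
    rwa [hcc0] at this
  have hvar : ∀ i, i ≤ m₀ → cr * ∫ v in Set.Ioc 0 (cc i), ‖f v‖ ≤ Tr i := by
    intro i
    induction i with
    | zero =>
      intro _
      rw [hcc0, hTr0]
      simp
    | succ j ih =>
      intro hj1
      have hj : j ≤ m₀ := by omega
      have hjlt : j < m₀ := by omega
      have ihj := ih hj
      have h0j : 0 ≤ cc j := hccnn j hj
      have hjj1 : cc j ≤ cc (j + 1) := (hccmono j hjlt).le
      have hsplit : ∫ v in Set.Ioc 0 (cc (j+1)), ‖f v‖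
          = (∫ v in Set.Ioc 0 (cc j), ‖f v‖)
            + ∫ v in Set.Ioc (cc j) (cc (j+1)), ‖f v‖ := by
        rw [← MeasureTheory.setIntegral_union (Set.Ioc_disjoint_Ioc_of_le le_rfl) measurableSet_Ioc
          ((hfint 0 (cc j) (le_refl 0) h0j).norm)
          ((hfint (cc j) (cc (j+1)) h0j hjj1).norm),
          Set.Ioc_union_Ioc_eq_Ioc h0j hjj1]
      have hgnorm : ‖g (cc j)‖ ≤ cr * ∫ v in Set.Ioc 0 (cc j), ‖f v‖ := by
        rw [hgeq (cc j) h0j, norm_neg, norm_smul, Real.norm_eq_abs, abs_of_pos hcr]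
        exact mul_le_mul_of_nonneg_left (MeasureTheory.norm_integral_le_integral_norm f)
          hcr.le
      have hyval : ‖y (cc j)‖ ≤ Yc := by
        calc ‖y (cc j)‖ = ‖(fnP k (cc j)).1‖ := rfl
          _ ≤ ‖fnP k (cc j)‖ := norm_fst_le _
          _ ≤ Yc := hccval j hj
      have hxbound : ‖x (cc j) - a‖ ≤ R + Tr j := by
        have he : x (cc j) - a = y (cc j) + ((g (cc j)) - a) := by
          rw [hxg (cc j) h0j]; abel
        calc ‖x (cc j) - a‖ = ‖y (cc j) + ((g (cc j)) - a)‖ := by rw [he]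
          _ ≤ ‖y (cc j)‖ + ‖g (cc j) - a‖ := norm_add_le _ _
          _ ≤ ‖y (cc j)‖ + (‖g (cc j)‖ + ‖a‖) := by
              linarith only [norm_sub_le (g (cc j)) a]
          _ ≤ R + Tr j := by rw [hRdef]; linarith only [hgnorm, hyval, ihj]
      have hosccell : ∀ v ∈ Set.Ioo (cc j) (cc (j+1)), ‖y v - y (cc j)‖ ≤ r / 2 := by
        intro v hv
        calc ‖y v - y (cc j)‖ = ‖(fnP k v - fnP k (cc j)).1‖ := rfl
          _ ≤ ‖fnP k v - fnP k (cc j)‖ := norm_fst_le _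
          _ ≤ r / 2 := hccosc j hjlt v ⟨hv.1.le, hv.2⟩ (cc j)
              ⟨le_refl _, hccmono j hjlt⟩
      have hcell := Stmt13Aux.coreVar hC hproj hr hball hcr.le hf hxg hgdiff h0j hjj1
        (hfint (cc j) (cc (j+1)) h0j hjj1) hosccell
      have hsq : ‖x (cc j) - a‖ ^ 2 / r ≤ (R + Tr j) ^ 2 / r := by
        have hsqbase : ‖x (cc j) - a‖ ^ 2 ≤ (R + Tr j) ^ 2 := by
          nlinarith [norm_nonneg (x (cc j) - a), hxbound]
        gcongr
      rw [hTrsucc j, hsplit, mul_add]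
      linarith only [hcell, hsq, ihj]
  have htotal : ∀ σ τ : ℝ, 0 ≤ σ → σ ≤ τ → τ ≤ cc m₀ →
      cr * ∫ v in Set.Ioc σ τ, ‖f v‖ ≤ V := by
    intro σ τ h1 h2 h3
    have h0m : (0:ℝ) ≤ cc m₀ := hccnn m₀ (le_refl _)
    have hmono : ∫ v in Set.Ioc σ τ, ‖f v‖ ≤ ∫ v in Set.Ioc 0 (cc m₀), ‖f v‖ := by
      apply MeasureTheory.setIntegral_mono_set
        ((hfint 0 (cc m₀) (le_refl 0) h0m).norm)
        (Filter.Eventually.of_forall fun v => norm_nonneg (f v))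
        (HasSubset.Subset.eventuallyLE (Set.Ioc_subset_Ioc h1 h3))
    calc cr * ∫ v in Set.Ioc σ τ, ‖f v‖
        ≤ cr * ∫ v in Set.Ioc 0 (cc m₀), ‖f v‖ :=
          mul_le_mul_of_nonneg_left hmono hcr.le
      _ ≤ Tr m₀ := hvar m₀ (le_refl _)
      _ ≤ V := by rw [hVdef]; linarith only []
  -- fine partition
  obtain ⟨cf, hcf0, hcfm, hcfgap, hcfval, hcfosc⟩ := hfine k hkKf
  have hcfmono : ∀ i, i < m₁ → cf i < cf (i + 1) := fun i hi => by
    have := hcfgap i hi; linarith only [this, hG]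
  have hcfnn : ∀ i, i ≤ m₁ → 0 ≤ cf i := by
    intro i hi
    have := Stmt13Aux.part_mono hcfmono 0 i (Nat.zero_le i) hi
    rwa [hcf0] at this
  -- the bad triple for index n = nseq k
  obtain ⟨s, u, t, hs0, hsu, hut, htq, hts, hmin⟩ := hFbad (ψ k)
  have hδsmall : 1 / ((ψ k : ℝ) + 1) < G / 4 := by
    have h2 : Kd + 1 ≤ k := hkKd
    have h3 : k ≤ ψ k := hψ.le_apply
    have h4 : (Kd : ℝ) + 1 ≤ (ψ k : ℝ) := by exact_mod_cast le_trans h2 h3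
    have h4G : (0:ℝ) < 4 / G := by positivity
    have h5 : 4 / G < (ψ k : ℝ) + 1 := by linarith only [h4, hKd]
    have h6 : 1 / ((ψ k : ℝ) + 1) < 1 / (4 / G) := one_div_lt_one_div_of_lt h4G h5
    have h7 : 1 / (4 / G) = G / 4 := by field_simp
    linarith only [h6, h7]
  have htsG : t - s < G / 4 := lt_trans hts hδsmall
  have hu0 : 0 ≤ u := le_trans hs0 hsu.le
  have hucf0 : cf 0 ≤ u := by rw [hcf0]; exact hu0
  have hucfm : u < cf m₁ := by
    have h1 : q + 1 - 1/2 ≤ cf m₁ := hcfm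
    linarith only [h1, hut, htq]
  obtain ⟨i, hi, hui1, hui2⟩ := Stmt13Aux.exists_cell hcfmono hucf0 hucfm
  have hmin' : ε < min ‖x u - x s‖ ‖z t - z u‖ := hmin
  rw [lt_min_iff] at hmin'
  rcases lt_or_ge t (cf (i + 1)) with hcase | hcase
  · -- z does not move between u and t
    have htlo : cf i ≤ t := le_trans hui1 hut.le
    have h2 : ‖z t - z u‖ ≤ η := by
      calc ‖z t - z u‖ = ‖(fnP k t - fnP k u).2‖ := rfl
        _ ≤ ‖fnP k t - fnP k u‖ := norm_snd_le _
        _ ≤ η := hcfosc i hi t ⟨htlo, hcase⟩ u ⟨hui1, hui2⟩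
    have hηε : η ≤ ε := by linarith only [hη22, hε]
    linarith only [hmin'.2, h2, hηε]
  · -- x does not move between s and u
    have hgap1 : cf i + G ≤ cf (i + 1) := hcfgap i hi
    have hscell : cf i + 3 * θ ≤ s := by
      rw [hθdef]; linarith only [htsG, hcase, hgap1]
    have hα : 0 ≤ cf i := hcfnn i hi.le
    have hsθα : cf i ≤ s - θ := by linarith only [hscell, hθ]
    have hoscy : ∀ v ∈ Set.Ico (cf i) (cf (i+1)), ∀ v' ∈ Set.Ico (cf i) (cf (i+1)),
        ‖y v - y v'‖ ≤ η := by
      intro v hv v' hv'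
      calc ‖y v - y v'‖ = ‖(fnP k v - fnP k v').1‖ := rfl
        _ ≤ ‖fnP k v - fnP k v'‖ := norm_fst_le _
        _ ≤ η := hcfosc i hi v hv v' hv'
    have hsθ0 : (0:ℝ) ≤ s - θ := le_trans hα hsθα
    have hsle : s ≤ u := hsu.le
    have hucc : u ≤ cc m₀ := by
      have h1 : q + 1 - 1/2 ≤ cc m₀ := hccm
      linarith only [h1, hut, htq]
    have hscc : s ≤ cc m₀ := by linarith only [hsu, hucc]
    have hV1 : cr * ∫ v in Set.Ioc (s - θ) s, ‖f v‖ ≤ V :=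
      htotal (s - θ) s hsθ0 (by linarith only [hθ]) hscc
    have hV2 : cr * ∫ v in Set.Ioc s u, ‖f v‖ ≤ V :=
      htotal s u (by linarith only [hs0]) hsle hucc
    have hsmall : 2 * V / (cr * θ) ≤ η := by
      rw [div_le_iff₀ (by positivity)]
      have h1 : 2 * V / (θ * η) ≤ cr := hcr_large
      rw [div_le_iff₀ (by positivity)] at h1
      have h2 : cr * (θ * η) = η * (cr * θ) := by ring
      linarith only [h1, h2]
    have hgcs : ContinuousOn g (Set.Icc (s - θ) s) :=
      (hgc s).mono (Set.Icc_subset_Icc hsθ0 (le_refl s))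
    have hfint2 : IntegrableOn f (Set.Ioc (s - θ) u) :=
      hfint (s - θ) u hsθ0 (by linarith only [hθ, hsle])
    have hxest := Stmt13Aux.coreOsc hC hproj hcr hf hxg hgdiff hα hθ hη hV
      hsθα hsle hui2 hoscy hfint2 hgcs hV1 hV2 hsmall
    have hsqrt : Real.sqrt (2 * η * V) ≤ ε / 2 := by
      have h2 : η * (8 * V) ≤ ε ^ 2 := (le_div_iff₀ (by positivity)).1 hη8V
      have h1 : 2 * η * V ≤ (ε / 2) ^ 2 := by
        have h3 : 2 * η * V = (η * (8 * V)) / 4 := by ring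
        have h4 : (ε / 2) ^ 2 = ε ^ 2 / 4 := by ring
        linarith only [h2, h3, h4]
      calc Real.sqrt (2 * η * V) ≤ Real.sqrt ((ε / 2) ^ 2) := Real.sqrt_le_sqrt h1
        _ = ε / 2 := Real.sqrt_sq (by positivity)
    have hfinal : ‖x u - x s‖ ≤ ε := by
      calc ‖x u - x s‖ ≤ 11 * η + Real.sqrt (2 * η * V) := hxest
        _ ≤ 11 * (ε / 22) + ε / 2 := by linarith only [hη22, hsqrt]
        _ = ε := by ring
    linarith only [hmin'.1, hfinal]
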